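/- arXiv:2510.07086 — 7 statements merged into one kernel-verified Lean document; each statement's English description precedes it below -/
import Mathlib

section
/- Let W be a closed convex subset of the space of d×n real matrices with Frobenius-norm diameter at most D. Run online gradient descent with a non-increasing sequence of positive learning rates η_t: W_{t+1} = proj_W(W_t − η_t G_t) where G_t is a subgradient of the convex loss L_t at W_t. Then for any comparator sequence U_1,…,U_T in W, letting P_T = Σ_{t=2}^T ‖U_t − U_{t−1}‖_F, we have Σ_{t=1}^T (L_t(W_t) − L_t(U_t)) ≤ (D/η_T)(D/2 + P_T) + Σ_{t=1}^T (η_t/2)‖G_t‖_F². -/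
open Finset

/-- Projection onto a convex set is a contraction (at the squared level). -/
lemma proj_contract_sq {E : Type*} [NormedAddCommGroup E] [InnerProductSpace ℝ E] {K : Set E}
    (hK : Convex ℝ K) (y p : E) (hp : p ∈ K)
    (hmin : ∀ u ∈ K, ‖p - y‖ ≤ ‖u - y‖) {u : E} (hu : u ∈ K) :
    ‖p - u‖ ^ 2 ≤ ‖y - u‖ ^ 2 := by
  have hne : Nonempty K := ⟨⟨p, hp⟩⟩
  have heq : ‖y - p‖ = ⨅ w : K, ‖y - w‖ := by
    apply le_antisymm
    · apply le_ciInf; intro w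
      rw [norm_sub_rev]
      calc ‖p - y‖ ≤ ‖(w : E) - y‖ := hmin w w.2
        _ = ‖y - (w : E)‖ := norm_sub_rev _ _
    · exact ciInf_le ⟨0, by rintro x ⟨w, rfl⟩; exact norm_nonneg _⟩ (⟨p, hp⟩ : K)
  have hvar := (norm_eq_iInf_iff_real_inner_le_zero hK hp).1 heq u hu
  have hid : ‖y - u‖ ^ 2 = ‖y - p‖ ^ 2 + 2 * (inner ℝ (y - p) (p - u) : ℝ) + ‖p - u‖ ^ 2 := by
    have := norm_add_sq_real (y - p) (p - u)
    calc ‖y - u‖ ^ 2 = ‖(y - p) + (p - u)‖ ^ 2 := by abel_nf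
      _ = _ := norm_add_sq_real (y - p) (p - u)
  have hneg : (inner ℝ (y - p) (p - u) : ℝ) = - (inner ℝ (y - p) (u - p) : ℝ) := by
    rw [← inner_neg_right, neg_sub]
  nlinarith [sq_nonneg ‖y - p‖]
lemma ogd_sum_bound (D : ℝ) (a b p η : ℕ → ℝ) (hD : 0 ≤ D)
    (haD : ∀ t, a t ≤ D ^ 2) (ha : ∀ t, 0 ≤ a t)
    (hb : ∀ t, a (t + 1) - 2 * D * p t ≤ b t)
    (hp : ∀ t, 0 ≤ p t) (hη : ∀ t, 0 < η t)
    (hmono : ∀ s t, s ≤ t → η t ≤ η s) :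
    ∀ T, ∑ t ∈ Finset.range (T + 1), (a t - b t) / (2 * η t) ≤
      D ^ 2 / (2 * η T) - b T / (2 * η T)
        + (D / η T) * ∑ t ∈ Finset.range T, p t := by
  intro T
  induction T with
  | zero =>
    simp only [zero_add, Finset.sum_range_one, Finset.range_zero, Finset.sum_empty,
      mul_zero, add_zero]
    rw [← sub_div]
    gcongr
    · linarith [hη 0]
    · linarith [haD 0]
  | succ T IH =>
    rw [Finset.sum_range_succ]
    have key : D ^ 2 / (2 * η T) - b T / (2 * η T) + (D / η T) * ∑ t ∈ Finset.range T, p t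
        + (a (T + 1) - b (T + 1)) / (2 * η (T + 1)) ≤
        D ^ 2 / (2 * η (T + 1)) - b (T + 1) / (2 * η (T + 1))
          + (D / η (T + 1)) * ∑ t ∈ Finset.range (T + 1), p t := by
      have hx : 0 < η T := hη T
      have hy : 0 < η (T + 1) := hη (T + 1)
      have hxy : η (T + 1) ≤ η T := hmono T (T + 1) (Nat.le_succ T)
      have huv : (η T)⁻¹ ≤ (η (T + 1))⁻¹ := by
        apply inv_anti₀ hy hxy
      have hu : 0 < (η T)⁻¹ := by positivity
      have hP : 0 ≤ ∑ t ∈ Finset.range T, p t := Finset.sum_nonneg fun t _ => hp t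
      rw [Finset.sum_range_succ]
      set P := ∑ t ∈ Finset.range T, p t
      have hbT := hb T
      have haT := haD (T + 1)
      have haT0 := ha (T + 1)
      have hpT := hp T
      simp only [div_eq_mul_inv, mul_inv]
      nlinarith [mul_nonneg (mul_nonneg hD hpT) (sub_nonneg.2 huv),
        mul_nonneg (mul_nonneg hD hP) (sub_nonneg.2 huv),
        mul_nonneg (sub_nonneg.2 haT) (sub_nonneg.2 huv),
        mul_nonneg haT0 (sub_nonneg.2 huv),
        mul_le_mul_of_nonneg_right hbT hu.le]
    linarith [IH]


/-- Dynamic regret bound of online gradient descent with non-increasing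
learning rates (Proposition 1). The space of `d × n` real matrices with the
Frobenius norm is modeled as `EuclideanSpace ℝ (Fin d × Fin n)`. -/
theorem ogd_dynamic_regret {d n T : ℕ} (hT : 0 < T)
    (Wset : Set (EuclideanSpace ℝ (Fin d × Fin n))) (D : ℝ)
    (hclosed : IsClosed Wset) (hconv : Convex ℝ Wset)
    (hdiam : ∀ w ∈ Wset, ∀ w' ∈ Wset, ‖w - w'‖ ≤ D)
    (L : ℕ → EuclideanSpace ℝ (Fin d × Fin n) → ℝ)
    (hLconv : ∀ t, ConvexOn ℝ Wset (L t))
    (η : ℕ → ℝ) (hηpos : ∀ t, 0 < η t)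
    (hηmono : ∀ s t, s ≤ t → η t ≤ η s)
    (W G : ℕ → EuclideanSpace ℝ (Fin d × Fin n))
    (hWmem : ∀ t, W t ∈ Wset)
    -- G t is a subgradient of L t at W t
    (hsub : ∀ t, ∀ u ∈ Wset, L t (W t) + (inner ℝ (G t) (u - W t) : ℝ) ≤ L t u)
    -- W (t+1) is the nearest-point projection of W t - η t • G t onto Wset
    (hproj : ∀ t, ∀ u ∈ Wset,
      ‖W (t + 1) - (W t - η t • G t)‖ ≤ ‖u - (W t - η t • G t)‖)
    (U : ℕ → EuclideanSpace ℝ (Fin d × Fin n)) (hU : ∀ t, U t ∈ Wset) :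
    ∑ t ∈ Finset.range T, (L t (W t) - L t (U t)) ≤
      (D / η (T - 1)) * (D / 2 + ∑ t ∈ Finset.range (T - 1), ‖U (t + 1) - U t‖)
        + ∑ t ∈ Finset.range T, (η t / 2) * ‖G t‖ ^ 2 := by
  have hD : 0 ≤ D := by
    have := hdiam (W 0) (hWmem 0) (W 0) (hWmem 0)
    simpa using this
  set a : ℕ → ℝ := fun t => ‖W t - U t‖ ^ 2 with ha_def
  set b : ℕ → ℝ := fun t => ‖W (t + 1) - U t‖ ^ 2 with hb_def
  set p : ℕ → ℝ := fun t => ‖U (t + 1) - U t‖ with hp_def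
  -- per-step bound
  have hstep : ∀ t, L t (W t) - L t (U t) ≤
      (a t - b t) / (2 * η t) + (η t / 2) * ‖G t‖ ^ 2 := by
    intro t
    have h1 := hsub t (U t) (hU t)
    have hflip : (inner ℝ (G t) (U t - W t) : ℝ) = - (inner ℝ (G t) (W t - U t) : ℝ) := by
      rw [← inner_neg_right, neg_sub]
    have hLle : L t (W t) - L t (U t) ≤ (inner ℝ (G t) (W t - U t) : ℝ) := by
      rw [hflip] at h1; linarith
    have hcontr : b t ≤ ‖(W t - η t • G t) - U t‖ ^ 2 :=
      proj_contract_sq hconv (W t - η t • G t) (W (t + 1)) (hWmem (t + 1))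
        (fun u hu => hproj t u hu) (hU t)
    have hrw : (W t - η t • G t) - U t = (W t - U t) - η t • G t := by abel
    have hexp : ‖(W t - η t • G t) - U t‖ ^ 2 =
        a t - 2 * (η t * (inner ℝ (G t) (W t - U t) : ℝ)) + η t ^ 2 * ‖G t‖ ^ 2 := by
      rw [hrw, norm_sub_sq_real]
      have h2 : (inner ℝ (W t - U t) (η t • G t) : ℝ) =
          η t * (inner ℝ (G t) (W t - U t) : ℝ) := by
        rw [real_inner_smul_right, real_inner_comm]
      have h3 : ‖η t • G t‖ ^ 2 = η t ^ 2 * ‖G t‖ ^ 2 := by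
        rw [norm_smul, mul_pow, Real.norm_eq_abs, sq_abs]
      rw [h2, h3]
    have hηt : 0 < η t := hηpos t
    have h2η : 0 < 2 * η t := by linarith
    have hXle : (inner ℝ (G t) (W t - U t) : ℝ) ≤
        (a t - b t) / (2 * η t) + (η t / 2) * ‖G t‖ ^ 2 := by
      have heq : (a t - b t) / (2 * η t) + (η t / 2) * ‖G t‖ ^ 2 =
          (a t - b t + η t ^ 2 * ‖G t‖ ^ 2) / (2 * η t) := by
        field_simp
      rw [heq, le_div_iff₀ h2η]
      nlinarith [hcontr, hexp]
    linarith
  -- properties of a, b, p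
  have haD : ∀ t, a t ≤ D ^ 2 := fun t =>
    pow_le_pow_left₀ (norm_nonneg _) (hdiam (W t) (hWmem t) (U t) (hU t)) 2
  have ha0 : ∀ t, 0 ≤ a t := fun t => sq_nonneg _
  have hp0 : ∀ t, 0 ≤ p t := fun t => norm_nonneg _
  have hb0 : ∀ t, 0 ≤ b t := fun t => sq_nonneg _
  have hab : ∀ t, a (t + 1) - 2 * D * p t ≤ b t := by
    intro t
    set x := ‖W (t + 1) - U (t + 1)‖ with hx_def
    set y := ‖W (t + 1) - U t‖ with hy_def
    have hxq : x ≤ y + p t := by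
      have : W (t + 1) - U (t + 1) = (W (t + 1) - U t) - (U (t + 1) - U t) := by abel
      rw [hx_def, this]
      exact (norm_sub_le _ _).trans (by rw [hp_def])
    have hxD : x ≤ D := hdiam _ (hWmem _) _ (hU _)
    have hyD : y ≤ D := hdiam _ (hWmem _) _ (hU _)
    have hx0 : 0 ≤ x := norm_nonneg _
    have hy0 : 0 ≤ y := norm_nonneg _
    have hq0 : 0 ≤ p t := hp0 t
    show x ^ 2 - 2 * D * p t ≤ y ^ 2
    rcases le_total x y with h | h
    · nlinarith [mul_nonneg hD hq0]
    · have h1 : x - y ≤ p t := by linarith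
      have h2 : (x + y) * (x - y) ≤ (2 * D) * p t :=
        mul_le_mul (by linarith) h1 (by linarith) (by linarith)
      nlinarith
  -- summation
  obtain ⟨S, rfl⟩ : ∃ S, T = S + 1 := ⟨T - 1, (Nat.succ_pred_eq_of_pos hT).symm⟩
  have hsum := ogd_sum_bound D a b p η hD haD ha0 hab hp0 hηpos hηmono S
  have hsum1 : ∑ t ∈ Finset.range (S + 1), (L t (W t) - L t (U t)) ≤
      ∑ t ∈ Finset.range (S + 1), ((a t - b t) / (2 * η t) + (η t / 2) * ‖G t‖ ^ 2) :=
    Finset.sum_le_sum fun t _ => hstep t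
  rw [Finset.sum_add_distrib] at hsum1
  have hηS : 0 < η S := hηpos S
  have hbS : 0 ≤ b S / (2 * η S) := by positivity
  have hfin : D ^ 2 / (2 * η S) + (D / η S) * ∑ t ∈ Finset.range S, p t =
      (D / η S) * (D / 2 + ∑ t ∈ Finset.range S, p t) := by
    field_simp
  have hS1 : S + 1 - 1 = S := rfl
  rw [hS1]
  calc ∑ t ∈ Finset.range (S + 1), (L t (W t) - L t (U t)) ≤
      ∑ t ∈ Finset.range (S + 1), (a t - b t) / (2 * η t)
        + ∑ t ∈ Finset.range (S + 1), (η t / 2) * ‖G t‖ ^ 2 := hsum1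
    _ ≤ (D / η S) * (D / 2 + ∑ t ∈ Finset.range S, p t)
        + ∑ t ∈ Finset.range (S + 1), (η t / 2) * ‖G t‖ ^ 2 := by
        rw [← hfin]; linarith
end

section
/- Run OGD with non-increasing learning rates η_t satisfying α/M ≤ η_t ≤ 2(L_t(W_t) − e_t)/‖G_t‖_F², where e_t = E_{ŷ∼π(θ_t)}[ℓ(ŷ, y_t)] denotes the expected target loss at round t. Then for any comparator sequence U_1,…,U_T in a convex set of diameter D, Σ_{t=1}^T e_t ≤ Σ_{t=1}^T L_t(U_t) + (MD/α)(D/2 + P_T), where P_T = Σ_{t=2}^T ‖U_t − U_{t−1}‖_F. -/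
open RealInnerProductSpace

lemma aux_proj_sq {E : Type*} [NormedAddCommGroup E] [InnerProductSpace ℝ E]
    {K : Set E} (hK : Convex ℝ K) {p y : E} (hp : p ∈ K)
    (hmin : ∀ w ∈ K, ‖p - y‖ ≤ ‖w - y‖) {u : E} (hu : u ∈ K) :
    ‖p - u‖ ^ 2 ≤ ‖y - u‖ ^ 2 := by
  haveI : Nonempty K := ⟨⟨p, hp⟩⟩
  have hinf : ‖y - p‖ = ⨅ w : K, ‖y - w‖ := by
    apply le_antisymm
    · exact le_ciInf fun w => by
        rw [norm_sub_rev, norm_sub_rev y]; exact hmin w w.2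
    · have hbdd : BddBelow (Set.range fun w : K => ‖y - (w : E)‖) :=
        ⟨0, by rintro x ⟨w, rfl⟩; exact norm_nonneg _⟩
      exact ciInf_le hbdd ⟨p, hp⟩
  have hobt := (norm_eq_iInf_iff_real_inner_le_zero hK hp).mp hinf u hu
  have hexp : ‖y - u‖ ^ 2 = ‖y - p‖ ^ 2 - 2 * ⟪y - p, u - p⟫ + ‖u - p‖ ^ 2 := by
    have h1 : y - u = (y - p) - (u - p) := by abel
    rw [h1, norm_sub_sq_real]
  rw [norm_sub_rev p u]
  nlinarith [sq_nonneg ‖y - p‖]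

lemma aux_sq_diff {E : Type*} [NormedAddCommGroup E] [InnerProductSpace ℝ E]
    (x u v : E) :
    ‖x - u‖ ^ 2 - ‖x - v‖ ^ 2 ≤ (‖x - u‖ + ‖x - v‖) * ‖u - v‖ := by
  have hid : ‖x - u‖ ^ 2 - ‖x - v‖ ^ 2 = ⟪(x - u) + (x - v), v - u⟫ := by
    rw [← real_inner_self_eq_norm_sq, ← real_inner_self_eq_norm_sq]
    simp only [inner_add_left, inner_sub_left, inner_sub_right]
    have := real_inner_comm (x : E) u
    have := real_inner_comm (x : E) v
    have := real_inner_comm (u : E) v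
    linarith
  rw [hid]
  calc ⟪(x - u) + (x - v), v - u⟫ ≤ ‖(x - u) + (x - v)‖ * ‖v - u‖ := real_inner_le_norm _ _
    _ ≤ (‖x - u‖ + ‖x - v‖) * ‖u - v‖ := by
        rw [norm_sub_rev v u]
        exact mul_le_mul_of_nonneg_right (norm_add_le _ _) (norm_nonneg _)



/-- Theorem 1 ("small-surrogate-loss + path-length" bound via the surrogate
gap): running OGD with non-increasing learning rates in the range
`[α/M, 2(L_t(W_t) − e_t)/‖G_t‖²]` on convex non-negative surrogate losses
satisfying the surrogate-gap and self-bounding conditions yields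
`Σ e_t ≤ Σ L_t(U_t) + (MD/α)(D/2 + P_T)` for any comparator sequence. -/
theorem small_surrogate_loss_path_length_bound {d n T : ℕ} (hT : 0 < T)
    (Wset : Set (EuclideanSpace ℝ (Fin d × Fin n))) (D : ℝ)
    (hclosed : IsClosed Wset) (hconv : Convex ℝ Wset)
    (hdiam : ∀ w ∈ Wset, ∀ w' ∈ Wset, ‖w - w'‖ ≤ D)
    (L : ℕ → EuclideanSpace ℝ (Fin d × Fin n) → ℝ)
    (hLconv : ∀ t, ConvexOn ℝ Wset (L t))
    (hLnonneg : ∀ t w, 0 ≤ L t w)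
    (α M : ℝ) (hα : 0 < α) (hα1 : α < 1) (hM : 0 < M)
    (η : ℕ → ℝ) (hηmono : ∀ s t, s ≤ t → η t ≤ η s)
    (W G : ℕ → EuclideanSpace ℝ (Fin d × Fin n))
    (hWmem : ∀ t, W t ∈ Wset)
    -- G t is a subgradient of L t at W t
    (hsub : ∀ t, ∀ u ∈ Wset, L t (W t) + (inner ℝ (G t) (u - W t) : ℝ) ≤ L t u)
    -- OGD projection step
    (hproj : ∀ t, ∀ u ∈ Wset,
      ‖W (t + 1) - (W t - η t • G t)‖ ≤ ‖u - (W t - η t • G t)‖)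
    -- e t : expected target loss at round t
    (e : ℕ → ℝ) (henonneg : ∀ t, 0 ≤ e t)
    -- surrogate-gap condition
    (hgap : ∀ t, e t ≤ (1 - α) * L t (W t))
    -- self-bounding property
    (hsb : ∀ t, ‖G t‖ ^ 2 ≤ 2 * M * L t (W t))
    -- learning-rate range
    (hηlow : ∀ t, α / M ≤ η t)
    (hηhigh : ∀ t, η t * ‖G t‖ ^ 2 ≤ 2 * (L t (W t) - e t))
    (U : ℕ → EuclideanSpace ℝ (Fin d × Fin n)) (hU : ∀ t, U t ∈ Wset) :
    ∑ t ∈ Finset.range T, e t ≤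
      ∑ t ∈ Finset.range T, L t (U t)
        + M * D / α * (D / 2 + ∑ t ∈ Finset.range (T - 1), ‖U (t + 1) - U t‖) := by
  have hDnn : (0 : ℝ) ≤ D := by
    have := hdiam (W 0) (hWmem 0) (W 0) (hWmem 0)
    simpa using this
  have hηpos : ∀ t, 0 < η t := fun t => lt_of_lt_of_le (div_pos hα hM) (hηlow t)
  -- β t = (2 η t)⁻¹
  set β : ℕ → ℝ := fun t => (2 * η t)⁻¹ with hβ
  have hβpos : ∀ t, 0 < β t := fun t => by
    simp only [hβ]
    exact inv_pos.2 (by linarith [hηpos t])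
  have hβmono : ∀ s t, s ≤ t → β s ≤ β t := fun s t hst => by
    simp only [hβ]
    exact inv_anti₀ (by linarith [hηpos t]) (by linarith [hηmono s t hst])
  have hβle : ∀ t, β t ≤ M / (2 * α) := fun t => by
    simp only [hβ]
    have h0 : (0 : ℝ) < 2 * (α / M) := by
      have := div_pos hα hM; linarith
    have h1 : (2 : ℝ) * (α / M) ≤ 2 * η t := by linarith [hηlow t]
    have h2 := inv_anti₀ h0 h1
    have h3 : (2 * (α / M))⁻¹ = M / (2 * α) := by
      field_simp
    linarith [h2, h3.le, h3.ge]
  set b : ℕ → ℝ := fun t => ‖W t - U t‖ ^ 2 with hb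
  set c : ℕ → ℝ := fun t => ‖W (t + 1) - U t‖ ^ 2 with hc
  have hbD : ∀ t, b t ≤ D ^ 2 := fun t => by
    have h := hdiam (W t) (hWmem t) (U t) (hU t)
    simpa [hb] using pow_le_pow_left₀ (norm_nonneg _) h 2
  have hcD : ∀ t, c t ≤ D ^ 2 := fun t => by
    have h := hdiam (W (t + 1)) (hWmem (t + 1)) (U t) (hU t)
    simpa [hc] using pow_le_pow_left₀ (norm_nonneg _) h 2
  have hcnn : ∀ t, 0 ≤ c t := fun t => by simp only [hc]; positivity
  -- key per-round inequality
  have hkey : ∀ t, e t ≤ L t (U t) + (b t - c t) * β t := by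
    intro t
    have hpr := aux_proj_sq hconv (hWmem (t + 1)) (hproj t) (hU t)
    have hexp : ‖(W t - η t • G t) - U t‖ ^ 2
        = ‖W t - U t‖ ^ 2 - 2 * (η t * ⟪W t - U t, G t⟫) + η t ^ 2 * ‖G t‖ ^ 2 := by
      have h1 : (W t - η t • G t) - U t = (W t - U t) - η t • G t := by abel
      rw [h1, norm_sub_sq_real, real_inner_smul_right, norm_smul, Real.norm_eq_abs,
        mul_pow, sq_abs]
    have hsubt := hsub t (U t) (hU t)
    have hcomm : (inner ℝ (G t) (U t - W t) : ℝ) = - ⟪W t - U t, G t⟫ := by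
      have h1 : U t - W t = -(W t - U t) := by abel
      rw [h1, inner_neg_right, real_inner_comm]
    have hhigh := hηhigh t
    have hηt := hηpos t
    -- first: (e t - L t (U t)) * (2 * η t) ≤ b t - c t
    have hmain : (e t - L t (U t)) * (2 * η t) ≤ b t - c t := by
      have hA : c t ≤ b t - 2 * (η t * ⟪W t - U t, G t⟫) + η t ^ 2 * ‖G t‖ ^ 2 := by
        simp only [hb, hc]
        calc ‖W (t + 1) - U t‖ ^ 2 ≤ ‖(W t - η t • G t) - U t‖ ^ 2 := hpr
          _ = _ := hexp
      have hB : L t (W t) - L t (U t) ≤ ⟪W t - U t, G t⟫ := by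
        rw [hcomm] at hsubt; linarith
      have hC : η t * (η t * ‖G t‖ ^ 2) ≤ η t * (2 * (L t (W t) - e t)) :=
        mul_le_mul_of_nonneg_left hhigh hηt.le
      have hB' : η t * (L t (W t) - L t (U t)) ≤ η t * ⟪W t - U t, G t⟫ :=
        mul_le_mul_of_nonneg_left hB hηt.le
      nlinarith [hA, hC, hB']
    have h2η : (0 : ℝ) < 2 * η t := by linarith
    have := mul_le_mul_of_nonneg_right hmain (hβpos t).le
    rw [mul_assoc] at this
    rw [show (2 * η t) * β t = 1 by simp only [hβ]; field_simp] at this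
    linarith [this]
  -- telescoping bound
  have htel : ∀ N, 1 ≤ N →
      ∑ t ∈ Finset.range N, (b t - c t) * β t + c (N - 1) * β (N - 1)
        ≤ D ^ 2 * β (N - 1)
          + ∑ t ∈ Finset.range (N - 1), 2 * D * ‖U (t + 1) - U t‖ * β (t + 1) := by
    intro N hN
    induction N, hN using Nat.le_induction with
    | base =>
        simp only [Finset.sum_range_one, Nat.sub_self, Finset.range_zero,
          Finset.sum_empty, add_zero]
        have := mul_le_mul_of_nonneg_right (hbD 0) (hβpos 0).le
        nlinarith [this]
    | succ N hN ih =>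
        obtain ⟨m, rfl⟩ : ∃ m, N = m + 1 := ⟨N - 1, by omega⟩
        simp only [Nat.add_sub_cancel] at ih ⊢
        rw [Finset.sum_range_succ, Finset.sum_range_succ (fun t => 2 * D * ‖U (t + 1) - U t‖ * β (t + 1))]
        -- facts
        have hstep : b (m + 1) ≤ c m + 2 * D * ‖U (m + 1) - U m‖ := by
          have h1 := aux_sq_diff (W (m + 1)) (U (m + 1)) (U m)
          have h2 := hdiam (W (m + 1)) (hWmem (m + 1)) (U (m + 1)) (hU (m + 1))
          have h3 := hdiam (W (m + 1)) (hWmem (m + 1)) (U m) (hU m)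
          have h4 : ‖U (m + 1) - U m‖ ≥ 0 := norm_nonneg _
          have h5 : (‖W (m + 1) - U (m + 1)‖ + ‖W (m + 1) - U m‖) * ‖U (m + 1) - U m‖
              ≤ 2 * D * ‖U (m + 1) - U m‖ := by nlinarith
          simp only [hb, hc]
          linarith [h1, h5]
        have hβm := hβmono m (m + 1) (by omega)
        have hp := hβpos (m + 1)
        have hq := hβpos m
        have hcm := hcD m
        have hcnnm := hcnn m
        -- need: Σ_{m+2} + c(m+1)β(m+1) ≤ D²β(m+1) + Σ_{m+1}-terms
        have key2 : D ^ 2 * β m - c m * β m + b (m + 1) * β (m + 1)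
            ≤ D ^ 2 * β (m + 1) + 2 * D * ‖U (m + 1) - U m‖ * β (m + 1) := by
          nlinarith [mul_le_mul_of_nonneg_right hstep hp.le,
            mul_nonneg (sub_nonneg.2 hcm) (sub_nonneg.2 hβm)]
        have hFc : (b (m + 1) - c (m + 1)) * β (m + 1) + c (m + 1) * β (m + 1)
            = b (m + 1) * β (m + 1) := by ring
        linarith [ih, key2]
  -- assemble
  have hsum : ∑ t ∈ Finset.range T, e t
      ≤ ∑ t ∈ Finset.range T, L t (U t) + ∑ t ∈ Finset.range T, (b t - c t) * β t := by
    rw [← Finset.sum_add_distrib]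
    exact Finset.sum_le_sum fun t _ => hkey t
  have htelT := htel T hT
  have hrest : ∑ t ∈ Finset.range T, (b t - c t) * β t
      ≤ M * D / α * (D / 2 + ∑ t ∈ Finset.range (T - 1), ‖U (t + 1) - U t‖) := by
    have h1 : D ^ 2 * β (T - 1) ≤ D ^ 2 * (M / (2 * α)) :=
      mul_le_mul_of_nonneg_left (hβle (T - 1)) (by positivity)
    have h2 : ∑ t ∈ Finset.range (T - 1), 2 * D * ‖U (t + 1) - U t‖ * β (t + 1)
        ≤ ∑ t ∈ Finset.range (T - 1), 2 * D * ‖U (t + 1) - U t‖ * (M / (2 * α)) := by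
      apply Finset.sum_le_sum
      intro t _
      exact mul_le_mul_of_nonneg_left (hβle (t + 1)) (by positivity)
    have h3 : ∑ t ∈ Finset.range (T - 1), 2 * D * ‖U (t + 1) - U t‖ * (M / (2 * α))
        = M * D / α * ∑ t ∈ Finset.range (T - 1), ‖U (t + 1) - U t‖ := by
      rw [Finset.mul_sum]
      apply Finset.sum_congr rfl
      intro t _
      field_simp
    have h4 : 0 ≤ c (T - 1) * β (T - 1) := mul_nonneg (hcnn _) (hβpos _).le
    have h5 : D ^ 2 * (M / (2 * α)) = M * D / α * (D / 2) := by field_simp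
    calc ∑ t ∈ Finset.range T, (b t - c t) * β t
        ≤ D ^ 2 * β (T - 1)
          + ∑ t ∈ Finset.range (T - 1), 2 * D * ‖U (t + 1) - U t‖ * β (t + 1) := by
            linarith [htelT]
      _ ≤ D ^ 2 * (M / (2 * α))
          + M * D / α * ∑ t ∈ Finset.range (T - 1), ‖U (t + 1) - U t‖ := by
            linarith [h1, h2, h3.ge, h3.le]
      _ = M * D / α * (D / 2 + ∑ t ∈ Finset.range (T - 1), ‖U (t + 1) - U t‖) := by
            rw [h5]; ring
  linarith [hsum, hrest]
end

section
/- The multiclass smooth hinge loss satisfies the self-bounding property with constant M = 4: for every W, there is a subgradient G(W) of L(W) = φ(m(W)) with ‖G(W)‖_F² ≤ 8 L(W), where φ(m) = 1 − 2m for m ≤ 0, φ(m) = max{1−m,0}² for m > 0, and m(W) = ⟨e^{y}, Wx⟩ − max_{y'≠y} ⟨e^{y'}, Wx⟩ with ‖x‖₂ ≤ 1. -/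
set_option maxHeartbeats 1000000


/-- The multiclass smooth hinge loss is self-bounding with constant `M = 4`:
for every `W` there is a subgradient `G` of `L(W) = φ(m(W))` with
`‖G‖_F² ≤ 8 L(W)`, where the Frobenius quantities are written as explicit
sums. -/
theorem smooth_hinge_self_bounding {K n : ℕ} (hK : 2 ≤ K) (y : Fin K)
    (x : Fin n → ℝ) (hx : ∑ j, x j ^ 2 ≤ 1)
    (hne : (Finset.univ.erase y).Nonempty)
    (φ : ℝ → ℝ)
    (hφ : ∀ m : ℝ, φ m = if m ≤ 0 then 1 - 2 * m else max (1 - m) 0 ^ 2)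
    (margin : Matrix (Fin K) (Fin n) ℝ → ℝ)
    (hmargin : ∀ W, margin W =
      W.mulVec x y - (Finset.univ.erase y).sup' hne (fun y' => W.mulVec x y'))
    (L : Matrix (Fin K) (Fin n) ℝ → ℝ) (hL : ∀ W, L W = φ (margin W)) :
    ∀ W, ∃ G : Matrix (Fin K) (Fin n) ℝ,
      (∀ V, L W + ∑ i, ∑ j, G i j * (V i j - W i j) ≤ L V) ∧
      ∑ i, ∑ j, G i j ^ 2 ≤ 8 * L W := by
  intro W
  obtain ⟨t, ht, hts⟩ := Finset.exists_mem_eq_sup' hne (fun y' => W.mulVec x y')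
  have hty : t ≠ y := Finset.ne_of_mem_erase ht
  set m := margin W with hm
  have hmW : m = W.mulVec x y - W.mulVec x t := by rw [hm, hmargin, hts]
  set c : ℝ := if m ≤ 0 then 2 else if m < 1 then 2 * (1 - m) else 0 with hc
  have hc0 : 0 ≤ c := by
    rw [hc]; split_ifs with h1 h2 <;> nlinarith
  refine ⟨fun i j => c * (((if i = t then (1:ℝ) else 0) - (if i = y then 1 else 0)) * x j),
    ?_, ?_⟩
  · intro V
    beta_reduce
    have key : ∀ f : Fin K → Fin n → ℝ,
        (∑ i, ∑ j, c * (((if i = t then (1:ℝ) else 0) - (if i = y then 1 else 0)) * x j) * f i j)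
          = c * (∑ j, x j * f t j) - c * (∑ j, x j * f y j) := by
      intro f
      have h1 : ∀ i, (∑ j, c * (((if i = t then (1:ℝ) else 0) - (if i = y then 1 else 0)) * x j) * f i j)
          = (if i = t then c * ∑ j, x j * f i j else 0)
            - (if i = y then c * ∑ j, x j * f i j else 0) := by
        intro i
        rcases eq_or_ne i t with rfl | hit
        · simp only [if_neg hty, eq_self_iff_true, if_true, sub_zero]
          rw [Finset.mul_sum]
          exact Finset.sum_congr rfl fun j _ => by ring
        · rcases eq_or_ne i y with rfl | hiy
          · simp only [if_neg hit, eq_self_iff_true, if_true, zero_sub]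
            calc (∑ j, c * ((-1:ℝ) * x j) * f i j)
                = ∑ j, -(c * (x j * f i j)) := Finset.sum_congr rfl fun j _ => by ring
              _ = -∑ j, c * (x j * f i j) := Finset.sum_neg_distrib _
              _ = -(c * ∑ j, x j * f i j) := by rw [Finset.mul_sum]
          · simp only [if_neg hit, if_neg hiy, sub_zero]
            exact Finset.sum_eq_zero fun j _ => by ring
      rw [Finset.sum_congr rfl fun i _ => h1 i, Finset.sum_sub_distrib,
        Finset.sum_ite_eq' Finset.univ t, Finset.sum_ite_eq' Finset.univ y]
      simp
    have e1 : ∀ z : Fin K, ∑ j, x j * (V z j - W z j)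
        = V.mulVec x z - W.mulVec x z := by
      intro z
      simp only [Matrix.mulVec, dotProduct, ← Finset.sum_sub_distrib]
      exact Finset.sum_congr rfl fun j _ => by ring
    have hinner : (∑ i, ∑ j,
        (c * (((if i = t then (1:ℝ) else 0) - (if i = y then 1 else 0)) * x j)) * (V i j - W i j))
        = c * ((V.mulVec x t - V.mulVec x y) - (W.mulVec x t - W.mulVec x y)) := by
      rw [key (fun i j => V i j - W i j), e1 t, e1 y]; ring
    rw [hinner]
    set τ := margin V with hτ
    have hτle : τ ≤ V.mulVec x y - V.mulVec x t := by
      rw [hτ, hmargin]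
      exact sub_le_sub_left (Finset.le_sup' _ ht) _
    have step : c * ((V.mulVec x t - V.mulVec x y) - (W.mulVec x t - W.mulVec x y))
        ≤ c * (m - τ) := by
      apply mul_le_mul_of_nonneg_left _ hc0
      have hW : W.mulVec x t - W.mulVec x y = -m := by rw [hmW]; ring
      rw [hW]; linarith
    have main : L W + c * (m - τ) ≤ L V := by
      rw [hL W, hL V, ← hm, ← hτ, hφ m, hφ τ, hc]
      rcases le_or_gt m 0 with h1 | h1
      · rw [if_pos h1, if_pos h1]
        rcases le_or_gt τ 0 with h2 | h2
        · rw [if_pos h2]; linarith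
        · rw [if_neg (not_le.mpr h2)]
          rcases le_or_gt (1 - τ) 0 with h3 | h3
          · rw [max_eq_right h3]; nlinarith
          · rw [max_eq_left h3.le]; nlinarith [sq_nonneg τ]
      · rw [if_neg (not_le.mpr h1), if_neg (not_le.mpr h1)]
        rcases lt_or_ge m 1 with h4 | h4
        · rw [if_pos h4, max_eq_left (by linarith : (0:ℝ) ≤ 1 - m)]
          rcases le_or_gt τ 0 with h2 | h2
          · rw [if_pos h2]
            nlinarith [mul_nonneg h1.le (by linarith : (0:ℝ) ≤ m - 2*τ)]
          · rw [if_neg (not_le.mpr h2)]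
            rcases le_or_gt (1 - τ) 0 with h3 | h3
            · rw [max_eq_right h3]
              nlinarith [mul_nonneg (by linarith : (0:ℝ) ≤ 1 - m)
                (by linarith : (0:ℝ) ≤ 2*τ - 1 - m)]
            · rw [max_eq_left h3.le]; nlinarith [sq_nonneg (m - τ)]
        · rw [if_neg (not_lt.mpr h4), max_eq_right (by linarith : 1 - m ≤ 0)]
          rcases le_or_gt τ 0 with h2 | h2
          · rw [if_pos h2]; nlinarith
          · rw [if_neg (not_le.mpr h2)]
            nlinarith [sq_nonneg (max (1 - τ) 0)]
    linarith [main, step]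
  · beta_reduce
    set S := ∑ j, x j ^ 2 with hS
    have hS0 : 0 ≤ S := Finset.sum_nonneg fun j _ => sq_nonneg _
    have hsq : ∀ i : Fin K, (∑ j, (c * (((if i = t then (1:ℝ) else 0) - (if i = y then 1 else 0)) * x j)) ^ 2)
        = ((if i = t then (1:ℝ) else 0) + (if i = y then 1 else 0)) * (c ^ 2 * S) := by
      intro i
      rw [hS, Finset.mul_sum, Finset.mul_sum]
      refine Finset.sum_congr rfl fun j _ => ?_
      rcases eq_or_ne i t with rfl | hit
      · rw [if_pos rfl, if_neg hty]; ring
      · rcases eq_or_ne i y with rfl | hiy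
        · rw [if_neg hit, if_pos rfl]; ring
        · rw [if_neg hit, if_neg hiy]; ring
    rw [Finset.sum_congr rfl fun i _ => hsq i]
    have hrow : (∑ i : Fin K, ((if i = t then (1:ℝ) else 0) + (if i = y then 1 else 0)) * (c ^ 2 * S))
        = 2 * (c ^ 2 * S) := by
      simp only [add_mul, ite_mul, one_mul, zero_mul, Finset.sum_add_distrib,
        Finset.sum_ite_eq' Finset.univ, Finset.mem_univ, if_true]
      ring
    rw [hrow, hL W, ← hm, hφ m, hc]
    rcases le_or_gt m 0 with h1 | h1
    · rw [if_pos h1, if_pos h1]; nlinarith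
    · rw [if_neg (not_le.mpr h1), if_neg (not_le.mpr h1)]
      rcases lt_or_ge m 1 with h4 | h4
      · rw [if_pos h4, max_eq_left (by linarith : (0:ℝ) ≤ 1 - m)]
        nlinarith [sq_nonneg (1 - m), mul_nonneg (sq_nonneg (1 - m)) hS0]
      · rw [if_neg (not_lt.mpr h4), max_eq_right (by linarith : 1 - m ≤ 0)]
        norm_num
end

section
/- The univariate function φ : ℝ → ℝ defined by φ(m) = 1 − 2m for m ≤ 0 and φ(m) = max{1−m, 0}² for m > 0 is convex, non-increasing, non-negative, and continuous; moreover every element g of its subdifferential satisfies g² ≤ 8 φ(m). -/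
open Set

private noncomputable def hingeSlope (m : ℝ) : ℝ := -2 * min (max (1 - m) 0) 1

private lemma hingeSlope_of_nonpos {m : ℝ} (h : m ≤ 0) : hingeSlope m = -2 := by
  unfold hingeSlope
  rw [max_eq_left (by linarith), min_eq_right (by linarith)]
  ring

private lemma hingeSlope_of_mem {m : ℝ} (h0 : 0 ≤ m) (h1 : m ≤ 1) :
    hingeSlope m = -2 * (1 - m) := by
  unfold hingeSlope
  rw [max_eq_left (by linarith), min_eq_left (by linarith)]

private lemma hingeSlope_of_ge {m : ℝ} (h : 1 ≤ m) : hingeSlope m = 0 := by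
  unfold hingeSlope
  rw [max_eq_right (by linarith), min_eq_left (by linarith)]
  ring

private lemma hingeSlope_mono : Monotone hingeSlope := by
  intro a b hab
  unfold hingeSlope
  have : min (max (1 - b) 0) 1 ≤ min (max (1 - a) 0) 1 :=
    min_le_min (max_le_max (by linarith) le_rfl) le_rfl
  nlinarith

private lemma hingeSlope_nonpos (m : ℝ) : hingeSlope m ≤ 0 := by
  unfold hingeSlope
  have h1 : (0:ℝ) ≤ max (1 - m) 0 := le_max_right _ _
  have : (0:ℝ) ≤ min (max (1 - m) 0) 1 := le_min h1 zero_le_one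
  nlinarith

private lemma hinge_hasDerivAt (φ : ℝ → ℝ)
    (hφ : ∀ m : ℝ, φ m = if m ≤ 0 then 1 - 2 * m else max (1 - m) 0 ^ 2) :
    ∀ m, HasDerivAt φ (hingeSlope m) m := by
  have hlin : ∀ x ∈ Iic (0:ℝ), φ x = 1 - 2 * x := by
    intro x hx
    rw [hφ, if_pos (mem_Iic.mp hx)]
  have hmid : ∀ x ∈ Icc (0:ℝ) 1, φ x = (1 - x) ^ 2 := by
    intro x hx
    rw [hφ]
    rcases eq_or_lt_of_le hx.1 with h | h
    · rw [← h]
      norm_num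
    · rw [if_neg (by linarith), max_eq_left (by linarith [hx.2])]
  have hzero : ∀ x ∈ Ici (1:ℝ), φ x = 0 := by
    intro x hx
    rw [hφ, if_neg (by simp at hx; linarith), max_eq_right (by simp at hx; linarith)]
    simp
  -- derivative building blocks
  have dlin : ∀ x : ℝ, HasDerivAt (fun y : ℝ => 1 - 2 * y) (-2) x := by
    intro x
    simpa using ((hasDerivAt_id x).const_mul (2:ℝ)).const_sub (1:ℝ)
  have dmid : ∀ x : ℝ, HasDerivAt (fun y : ℝ => (1 - y) ^ 2) (-2 * (1 - x)) x := by
    intro x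
    have h1 : HasDerivAt (fun y : ℝ => 1 - y) (-1) x := by
      simpa using (hasDerivAt_id x).const_sub (1:ℝ)
    simpa [mul_comm, mul_assoc, mul_left_comm] using h1.fun_pow 2
  intro m
  rcases lt_trichotomy m 0 with hm | hm | hm
  · rw [hingeSlope_of_nonpos hm.le]
    refine (dlin m).congr_of_eventuallyEq ?_
    filter_upwards [Iio_mem_nhds hm] with x hx using hlin x (mem_Iic.mpr hx.le)
  · subst hm
    rw [hingeSlope_of_nonpos le_rfl]
    have h1 : HasDerivWithinAt φ (-2) (Iic (0:ℝ)) 0 :=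
      ((dlin 0).hasDerivWithinAt).congr hlin (hlin 0 self_mem_Iic)
    have h2 : HasDerivWithinAt φ (-2) (Icc (0:ℝ) 1) 0 := by
      have := ((dmid 0).hasDerivWithinAt (s := Icc (0:ℝ) 1)).congr hmid
        (hmid 0 (left_mem_Icc.2 zero_le_one))
      simpa using this
    have hu := h1.union h2
    have : Iic (0:ℝ) ∪ Icc 0 1 = Iic 1 := by
      ext x; simp [Iic, Icc]; constructor
      · rintro (h | h)
        · linarith
        · exact h.2
      · intro h; rcases le_or_gt x 0 with h0 | h0
        · exact Or.inl h0
        · exact Or.inr ⟨h0.le, h⟩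
    rw [this] at hu
    exact hu.hasDerivAt (Iic_mem_nhds one_pos)
  · rcases lt_trichotomy m 1 with hm1 | hm1 | hm1
    · rw [hingeSlope_of_mem hm.le hm1.le]
      refine (dmid m).congr_of_eventuallyEq ?_
      filter_upwards [Ioo_mem_nhds hm hm1] with x hx using hmid x ⟨hx.1.le, hx.2.le⟩
    · subst hm1
      rw [hingeSlope_of_ge le_rfl]
      have h1 : HasDerivWithinAt φ 0 (Icc (0:ℝ) 1) 1 := by
        have := ((dmid 1).hasDerivWithinAt (s := Icc (0:ℝ) 1)).congr hmid
          (hmid 1 (right_mem_Icc.2 zero_le_one))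
        simpa using this
      have h2 : HasDerivWithinAt φ 0 (Ici (1:ℝ)) 1 :=
        ((hasDerivAt_const (1:ℝ) (0:ℝ)).hasDerivWithinAt).congr hzero (hzero 1 self_mem_Ici)
      have hu := h1.union h2
      have : Icc (0:ℝ) 1 ∪ Ici 1 = Ici 0 := by
        ext x; simp [Ici, Icc]; constructor
        · rintro (h | h)
          · exact h.1
          · linarith
        · intro h; rcases le_or_gt x 1 with h1 | h1
          · exact Or.inl ⟨h, h1⟩
          · exact Or.inr h1.le
      rw [this] at hu
      exact hu.hasDerivAt (Ici_mem_nhds zero_lt_one)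
    · rw [hingeSlope_of_ge hm1.le]
      refine (hasDerivAt_const m (0:ℝ)).congr_of_eventuallyEq ?_
      filter_upwards [Ioi_mem_nhds hm1] with x hx using hzero x (mem_Ici.mpr hx.le)

/-- The scalar smooth hinge loss `φ` is convex, non-increasing, non-negative
and continuous, and every subgradient `g` of `φ` at any point satisfies
`g² ≤ 8 φ(m)`. -/
theorem scalar_smooth_hinge_properties (φ : ℝ → ℝ)
    (hφ : ∀ m : ℝ, φ m = if m ≤ 0 then 1 - 2 * m else max (1 - m) 0 ^ 2) :
    ConvexOn ℝ Set.univ φ ∧ Antitone φ ∧ (∀ m, 0 ≤ φ m) ∧ Continuous φ ∧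
      ∀ m g : ℝ, (∀ m', φ m + g * (m' - m) ≤ φ m') → g ^ 2 ≤ 8 * φ m := by
  have hd := hinge_hasDerivAt φ hφ
  have hdiff : Differentiable ℝ φ := fun m => (hd m).differentiableAt
  have hderiv : deriv φ = hingeSlope := funext fun m => (hd m).deriv
  refine ⟨?_, ?_, ?_, hdiff.continuous, ?_⟩
  · exact Monotone.convexOn_univ_of_deriv hdiff (hderiv ▸ hingeSlope_mono)
  · exact antitone_of_deriv_nonpos hdiff (fun x => hderiv ▸ hingeSlope_nonpos x)
  · intro m
    rw [hφ]
    split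
    next h => linarith
    next h => positivity
  · intro m g hsub
    -- g equals the derivative
    have hF : HasDerivAt (fun x => φ x - (φ m + g * (x - m))) (hingeSlope m - g) m := by
      have h2 : HasDerivAt (fun x : ℝ => φ m + g * (x - m)) g m := by
        simpa using (((hasDerivAt_id m).sub_const m).const_mul g).const_add (φ m)
      exact (hd m).sub h2
    have hmin : IsLocalMin (fun x => φ x - (φ m + g * (x - m))) m := by
      have : ∀ x, (fun x => φ x - (φ m + g * (x - m))) m ≤
          (fun x => φ x - (φ m + g * (x - m))) x := by
        intro x
        have := hsub x
        simp only
        nlinarith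
      exact IsMinOn.isLocalMin (fun x _ => this x) Filter.univ_mem
    have hgeq : hingeSlope m - g = 0 := hmin.hasDerivAt_eq_zero hF
    have hg : g = hingeSlope m := by linarith
    subst hg
    rw [hφ]
    rcases le_or_gt m 0 with hm | hm
    · rw [if_pos hm, hingeSlope_of_nonpos hm]
      nlinarith
    · rw [if_neg (by linarith)]
      rcases le_or_gt m 1 with hm1 | hm1
      · rw [hingeSlope_of_mem hm.le hm1, max_eq_left (by linarith)]
        nlinarith
      · rw [hingeSlope_of_ge hm1.le, max_eq_right (by linarith)]
        norm_num
end

section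
/- Let τ(μ) = −min_{ŷ∈Ŷ} ⟨μ, ℓ^ρ(ŷ)⟩ over a finite prediction set Ŷ, and Ω_τ = Ω + τ. Then for any θ, (Ω + τ)*(θ) = min_{π ∈ Δ^N} Ω*(θ + L^ρ π), where L^ρ is the matrix whose columns are ℓ^ρ(ŷ) and Δ^N is the probability simplex over Ŷ. In particular Ω_τ*(θ) = Ω*(θ + L^ρ π(θ)) for any minimizer π(θ). -/
/-- Conjugate of the sum `Ω + τ`, where `τ(μ) = −min_{yh} ⟨μ, ℓ^ρ(yh)⟩`: it
equals the minimum over the probability simplex of `Ω*(θ + L^ρ π)`, and the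
minimum is attained. -/
theorem conv_fenchel_young_conjugate_identity {d N : ℕ} (hN : 0 < N)
    (hne : (Finset.univ : Finset (Fin N)).Nonempty)
    (ℓρ : Fin N → EuclideanSpace ℝ (Fin d))
    (τ : EuclideanSpace ℝ (Fin d) → ℝ)
    (hτ : ∀ μ, τ μ = - Finset.univ.inf' hne (fun yh => (inner ℝ μ (ℓρ yh) : ℝ)))
    (C : Set (EuclideanSpace ℝ (Fin d)))
    (hCne : C.Nonempty) (hCcomp : IsCompact C) (hCconv : Convex ℝ C)
    (Ω : EuclideanSpace ℝ (Fin d) → ℝ)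
    (hΩconv : ConvexOn ℝ C Ω) (hΩlsc : LowerSemicontinuousOn Ω C)
    (Ωstar Ωτstar : EuclideanSpace ℝ (Fin d) → ℝ)
    (hstar : ∀ θ, IsLUB ((fun μ => (inner ℝ θ μ : ℝ) - Ω μ) '' C) (Ωstar θ))
    (hτstar : ∀ θ,
      IsLUB ((fun μ => (inner ℝ θ μ : ℝ) - (Ω μ + τ μ)) '' C) (Ωτstar θ))
    (θ : EuclideanSpace ℝ (Fin d)) :
    ∃ π ∈ stdSimplex ℝ (Fin N),
      Ωτstar θ = Ωstar (θ + ∑ yh, π yh • ℓρ yh) ∧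
      ∀ π' ∈ stdSimplex ℝ (Fin N),
        Ωτstar θ ≤ Ωstar (θ + ∑ yh, π' yh • ℓρ yh) := by
  classical
  set v : ℝ := Ωτstar θ with hv
  set f : Fin N → EuclideanSpace ℝ (Fin d) → ℝ :=
    fun y μ => (inner ℝ (θ + ℓρ y) μ : ℝ) - Ω μ with hf
  -- rewriting the integrand of the conjugate of Ω + τ
  have hrw : ∀ μ, (inner ℝ θ μ : ℝ) - (Ω μ + τ μ)
      = Finset.univ.inf' hne (fun y => f y μ) := by
    intro μ
    have hg : ∀ x y : ℝ, (fun x => x + ((inner ℝ θ μ : ℝ) - Ω μ)) (x ⊓ y)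
        = (fun x => x + ((inner ℝ θ μ : ℝ) - Ω μ)) x
          ⊓ (fun x => x + ((inner ℝ θ μ : ℝ) - Ω μ)) y := by
      intro x y
      exact (min_add_add_right x y _).symm
    have hcmp := Finset.apply_inf'_eq_inf'_comp hne
      (f := fun yh => (inner ℝ μ (ℓρ yh) : ℝ))
      (fun x => x + ((inner ℝ θ μ : ℝ) - Ω μ)) hg
    have hB : (Finset.univ.inf' hne fun y => f y μ)
        = (Finset.univ.inf' hne fun yh => (inner ℝ μ (ℓρ yh) : ℝ))
          + ((inner ℝ θ μ : ℝ) - Ω μ) := by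
      refine Eq.trans ?_ hcmp.symm
      refine Finset.inf'_congr hne rfl fun y _ => ?_
      simp only [hf, Function.comp_apply, inner_add_left]
      rw [real_inner_comm μ (ℓρ y)]
      ring
    rw [hτ μ, hB]
    ring
  -- the value of a convex combination
  have hsum : ∀ π : Fin N → ℝ, (∑ y, π y = 1) → ∀ μ,
      (∑ y, π y * f y μ)
        = (inner ℝ (θ + ∑ y, π y • ℓρ y) μ : ℝ) - Ω μ := by
    intro π hπ μ
    have h1 : (inner ℝ ((∑ y, π y • ℓρ y : EuclideanSpace ℝ (Fin d))) μ : ℝ)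
        = ∑ y, π y * (inner ℝ (ℓρ y) μ : ℝ) := by
      rw [sum_inner]
      exact Finset.sum_congr rfl fun y _ => real_inner_smul_left _ _ _
    have h2 : ∀ y, π y * f y μ
        = π y * ((inner ℝ θ μ : ℝ) - Ω μ) + π y * (inner ℝ (ℓρ y) μ : ℝ) := by
      intro y
      simp only [hf, inner_add_left]
      ring
    rw [Finset.sum_congr rfl (fun y _ => h2 y), Finset.sum_add_distrib,
      ← Finset.sum_mul, hπ, one_mul, inner_add_left, h1]
    ring
  -- easy direction
  have heasy : ∀ π ∈ stdSimplex ℝ (Fin N),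
      v ≤ Ωstar (θ + ∑ y, π y • ℓρ y) := by
    intro π hπ
    refine (hτstar θ).2 ?_
    rintro x ⟨μ, hμ, rfl⟩
    show (inner ℝ θ μ : ℝ) - (Ω μ + τ μ) ≤ Ωstar (θ + ∑ y, π y • ℓρ y)
    rw [hrw μ]
    have h1 : Finset.univ.inf' hne (fun y => f y μ) ≤ ∑ y, π y * f y μ := by
      calc Finset.univ.inf' hne (fun y => f y μ)
          = ∑ y, π y * Finset.univ.inf' hne (fun y => f y μ) := by
            rw [← Finset.sum_mul, hπ.2, one_mul]
        _ ≤ ∑ y, π y * f y μ := Finset.sum_le_sum fun y _ =>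
            mul_le_mul_of_nonneg_left
              (Finset.inf'_le _ (Finset.mem_univ y)) (hπ.1 y)
    rw [hsum π hπ.2 μ] at h1
    exact h1.trans ((hstar _).1 ⟨μ, hμ, rfl⟩)
  -- every value of the τ-conjugate integrand is ≤ v
  have hle_v : ∀ μ ∈ C, Finset.univ.inf' hne (fun y => f y μ) ≤ v := by
    intro μ hμ
    rw [← hrw μ]
    exact (hτstar θ).1 ⟨μ, hμ, rfl⟩
  -- separation in ℝ^N
  set S : Set (Fin N → ℝ) := {z | ∃ μ ∈ C, ∀ y, z y ≤ f y μ} with hS_def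
  set T : Set (Fin N → ℝ) := Set.pi Set.univ (fun _ => Set.Ioi v) with hT_def
  have hmemT : ∀ z : Fin N → ℝ, z ∈ T ↔ ∀ y, v < z y := by
    intro z
    simp [hT_def, Set.mem_pi]
  have hSconv : Convex ℝ S := by
    rintro z₁ ⟨μ₁, hμ₁, hz₁⟩ z₂ ⟨μ₂, hμ₂, hz₂⟩ a b ha hb hab
    refine ⟨a • μ₁ + b • μ₂, hCconv hμ₁ hμ₂ ha hb hab, fun y => ?_⟩
    have hΩ : Ω (a • μ₁ + b • μ₂) ≤ a * Ω μ₁ + b * Ω μ₂ := by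
      simpa [smul_eq_mul] using hΩconv.2 hμ₁ hμ₂ ha hb hab
    have hlin : (inner ℝ (θ + ℓρ y) (a • μ₁ + b • μ₂) : ℝ)
        = a * (inner ℝ (θ + ℓρ y) μ₁ : ℝ) + b * (inner ℝ (θ + ℓρ y) μ₂ : ℝ) := by
      rw [inner_add_right, real_inner_smul_right, real_inner_smul_right]
    have h₁ := mul_le_mul_of_nonneg_left (hz₁ y) ha
    have h₂ := mul_le_mul_of_nonneg_left (hz₂ y) hb
    simp only [hf] at h₁ h₂ ⊢
    simp only [Pi.add_apply, Pi.smul_apply, smul_eq_mul]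
    rw [hlin]
    linarith
  have hTconv : Convex ℝ T := convex_pi fun _ _ => convex_Ioi v
  have hTopen : IsOpen T := isOpen_set_pi Set.finite_univ fun _ _ => isOpen_Ioi
  have hdisj : Disjoint T S := by
    rw [Set.disjoint_left]
    rintro z hzT ⟨μ, hμ, hz⟩
    have h1 : v < Finset.univ.inf' hne (fun y => f y μ) := by
      rw [Finset.lt_inf'_iff]
      intro y _
      exact lt_of_lt_of_le ((hmemT z).1 hzT y) (hz y)
    exact absurd (hle_v μ hμ) (not_le.mpr h1)
  obtain ⟨g, u, hgT, hgS⟩ := geometric_hahn_banach_open hTconv hTopen hSconv hdisj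
  -- coordinates of g
  set c : Fin N → ℝ := fun y => g (Pi.single y (1:ℝ)) with hc_def
  have hg_eq : ∀ z : Fin N → ℝ, g z = ∑ y, z y * c y := by
    intro z
    have hz : z = ∑ y, Pi.single y (z y) := (Finset.univ_sum_single z).symm
    calc g z = g (∑ y, Pi.single y (z y)) := by rw [← hz]
      _ = ∑ y, g (Pi.single y (z y)) := map_sum g _ _
      _ = ∑ y, z y * c y := by
          refine Finset.sum_congr rfl fun y _ => ?_
          have h1 : (Pi.single y (z y) : Fin N → ℝ)
              = z y • (Pi.single y (1:ℝ) : Fin N → ℝ) := by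
            rw [← Pi.single_smul, smul_eq_mul, mul_one]
          rw [h1, map_smul, smul_eq_mul]
  -- T is nonempty and S is nonempty
  have hTne : (fun _ => v + 1 : Fin N → ℝ) ∈ T := by
    rw [hmemT]; intro y; linarith
  obtain ⟨μ₀, hμ₀⟩ := hCne
  have hSne : (fun y => f y μ₀) ∈ S := ⟨μ₀, hμ₀, fun y => le_refl _⟩
  -- each c y is nonpositive
  have hc_nonpos : ∀ y, c y ≤ 0 := by
    intro y
    by_contra hcy
    push_neg at hcy
    set z0 : Fin N → ℝ := fun _ => v + 1 with hz0
    set t : ℝ := (|u - g z0| + 1) / c y with ht_def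
    have ht0 : 0 < t := div_pos (by positivity) hcy
    have htc : t * c y = |u - g z0| + 1 := div_mul_cancel₀ _ (ne_of_gt hcy)
    have hzT : z0 + t • (Pi.single y (1:ℝ) : Fin N → ℝ) ∈ T := by
      rw [hmemT]
      intro y'
      have h1 : (0:ℝ) ≤ t * (Pi.single y (1:ℝ) : Fin N → ℝ) y' := by
        rcases eq_or_ne y' y with h | h
        · simp [h, Pi.single_apply, le_of_lt ht0]
        · simp [Pi.single_apply, h]
      have h2 : (z0 + t • (Pi.single y (1:ℝ) : Fin N → ℝ)) y'
          = v + 1 + t * (Pi.single y (1:ℝ) : Fin N → ℝ) y' := by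
        simp [hz0, smul_eq_mul]
      rw [h2]
      linarith
    have hlt := hgT _ hzT
    rw [map_add, map_smul, smul_eq_mul] at hlt
    have hgy : g (Pi.single y (1:ℝ) : Fin N → ℝ) = c y := rfl
    rw [hgy] at hlt
    have habs := le_abs_self (u - g z0)
    linarith
  -- sum of the c y is negative
  set s1 : ℝ := ∑ y, c y with hs1_def
  have hs1_nonpos : s1 ≤ 0 := Finset.sum_nonpos fun y _ => hc_nonpos y
  have hs1_neg : s1 < 0 := by
    rcases lt_or_eq_of_le hs1_nonpos with h | h
    · exact h
    · exfalso
      have hall : ∀ y ∈ Finset.univ, c y = 0 :=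
        (Finset.sum_eq_zero_iff_of_nonpos fun y _ => hc_nonpos y).1 h
      have hz1 : ∑ y, ((v:ℝ) + 1) * c y = 0 :=
        Finset.sum_eq_zero fun y hy => by rw [hall y hy, mul_zero]
      have hz2 : ∑ y, f y μ₀ * c y = 0 :=
        Finset.sum_eq_zero fun y hy => by rw [hall y hy, mul_zero]
      have h1 := hgT _ hTne
      rw [hg_eq] at h1
      have h2 := hgS _ hSne
      rw [hg_eq] at h2
      rw [hz1] at h1
      rw [hz2] at h2
      linarith
  -- the optimal π
  set π : Fin N → ℝ := fun y => c y / s1 with hπ_def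
  have hπ_mem : π ∈ stdSimplex ℝ (Fin N) := by
    constructor
    · intro y
      have h0 : (0:ℝ) ≤ (-(c y)) / (-(s1)) :=
        div_nonneg (by linarith [hc_nonpos y]) (by linarith)
      rwa [neg_div_neg_eq] at h0
    · rw [hπ_def]
      simp only
      rw [← Finset.sum_div, ← hs1_def, div_self (ne_of_lt hs1_neg)]
  -- hard direction : Ωstar (θ + Lπ) ≤ v
  have hkey : ∀ μ ∈ C, ∑ y, π y * f y μ ≤ v := by
    intro μ hμ
    have hzS : (fun y => f y μ) ∈ S := ⟨μ, hμ, fun y => le_refl _⟩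
    have hu_le : u ≤ ∑ y, f y μ * c y := by
      have := hgS _ hzS
      rwa [hg_eq] at this
    have heq : ∑ y, π y * f y μ = (∑ y, f y μ * c y) / s1 := by
      rw [Finset.sum_div]
      exact Finset.sum_congr rfl fun y _ => by rw [hπ_def]; ring
    have hinv_neg : s1⁻¹ < 0 := inv_lt_zero.mpr hs1_neg
    refine le_of_forall_pos_le_add ?_
    intro ε hε
    have hwT : (fun _ => v + ε : Fin N → ℝ) ∈ T := by
      rw [hmemT]; intro y; linarith
    have hw := hgT _ hwT
    rw [hg_eq] at hw
    have hw' : (v + ε) * s1 < u := by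
      have : ∑ y, (v + ε) * c y = (v + ε) * s1 := by
        rw [hs1_def, Finset.mul_sum]
      linarith [hw, this.symm.le, this.le]
    -- divide the two inequalities by s1 < 0
    have h1 : (∑ y, f y μ * c y) * s1⁻¹ ≤ u * s1⁻¹ :=
      mul_le_mul_of_nonpos_right hu_le (le_of_lt hinv_neg)
    have h2 : u * s1⁻¹ < (v + ε) * s1 * s1⁻¹ :=
      mul_lt_mul_of_neg_right hw' hinv_neg
    have h3 : (v + ε) * s1 * s1⁻¹ = v + ε := by
      rw [mul_assoc, mul_inv_cancel₀ (ne_of_lt hs1_neg), mul_one]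
    rw [heq, div_eq_mul_inv]
    linarith
  have hhard : Ωstar (θ + ∑ y, π y • ℓρ y) ≤ v := by
    refine (hstar _).2 ?_
    rintro x ⟨μ, hμ, rfl⟩
    have := hkey μ hμ
    rwa [hsum π hπ_mem.2 μ] at this
  exact ⟨π, hπ_mem, le_antisymm (heasy π hπ_mem) hhard, heasy⟩
end

section
/- Target–surrogate relation for convolutional Fenchel–Young losses: with π(θ) ∈ argmin_{π∈Δ^N} Ω*(θ + L^ρ π) and the target loss decomposition ℓ(ŷ, y) = ⟨ρ(y), ℓ^ρ(ŷ)⟩ + c(y) with min_{ŷ} ℓ(ŷ, y) = 0, we have E_{ŷ∼π(θ)}[ℓ(ŷ, y)] = L_{Ω_τ}(θ, y) − L_Ω(θ + L^ρ π(θ), y), where L_{Ω_τ} and L_Ω are the Fenchel–Young losses generated by Ω_τ = Ω + τ and Ω respectively. -/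
/-- Target–surrogate relation for convolutional Fenchel–Young losses
(Lemma 1): with decoding distribution `π(θ)` minimizing `Ω*(θ + L^ρ π)` over
the simplex, the expected target loss equals
`L_{Ω_τ}(θ, y) − L_Ω(θ + L^ρ π(θ), y)`. -/
theorem target_surrogate_relation {d K N : ℕ}
    (hne : (Finset.univ : Finset (Fin N)).Nonempty)
    (ρ : Fin K → EuclideanSpace ℝ (Fin d))
    (ℓρ : Fin N → EuclideanSpace ℝ (Fin d))
    (c : Fin K → ℝ)
    (ℓ : Fin N → Fin K → ℝ)
    -- (ρ, ℓ^ρ)-decomposition of the target loss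
    (hdecomp : ∀ yh y, ℓ yh y = (inner ℝ (ρ y) (ℓρ yh) : ℝ) + c y)
    -- the target loss can take zero
    (hmin : ∀ y, Finset.univ.inf' hne (fun yh => ℓ yh y) = 0)
    (τ : EuclideanSpace ℝ (Fin d) → ℝ)
    (hτ : ∀ μ, τ μ = - Finset.univ.inf' hne (fun yh => (inner ℝ μ (ℓρ yh) : ℝ)))
    (Ω Ωstar Ωτstar : EuclideanSpace ℝ (Fin d) → ℝ)
    (θ : EuclideanSpace ℝ (Fin d)) (y : Fin K)
    (π : Fin N → ℝ) (hπ : π ∈ stdSimplex ℝ (Fin N))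
    -- π minimizes Ω*(θ + L^ρ ·) over the simplex
    (hminimizer : ∀ π' ∈ stdSimplex ℝ (Fin N),
      Ωstar (θ + ∑ yh, π yh • ℓρ yh) ≤ Ωstar (θ + ∑ yh, π' yh • ℓρ yh))
    -- the conjugate identity (Ω + τ)*(θ) = Ω*(θ + L^ρ π(θ))
    (hconj : Ωτstar θ = Ωstar (θ + ∑ yh, π yh • ℓρ yh))
    (LΩτ LΩ : EuclideanSpace ℝ (Fin d) → Fin K → ℝ)
    (hLΩτ : ∀ ξ y', LΩτ ξ y' =
      Ωτstar ξ + (Ω (ρ y') + τ (ρ y')) - (inner ℝ ξ (ρ y') : ℝ))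
    (hLΩ : ∀ ξ y', LΩ ξ y' = Ωstar ξ + Ω (ρ y') - (inner ℝ ξ (ρ y') : ℝ)) :
    ∑ yh, π yh * ℓ yh y = LΩτ θ y - LΩ (θ + ∑ yh, π yh • ℓρ yh) y := by
  have hsum : ∑ yh, π yh = 1 := hπ.2
  -- τ (ρ y) = c y
  have hτy : τ (ρ y) = c y := by
    have h1 : (Finset.univ.inf' hne (fun yh => (inner ℝ (ρ y) (ℓρ yh) : ℝ)))
        = Finset.univ.inf' hne (fun yh => ℓ yh y) - c y := by
      have h2 := Finset.apply_inf'_eq_inf'_comp (f := fun yh => ℓ yh y) hne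
        (fun x => x - c y) (fun a b => by simp [min_sub_sub_right])
      simp only [Function.comp] at h2
      rw [h2]
      apply Finset.inf'_congr _ rfl
      intro yh _
      rw [hdecomp yh y]; ring
    rw [hτ, h1, hmin y]; ring
  -- inner of sum
  have hinner : (inner ℝ (θ + ∑ yh, π yh • ℓρ yh) (ρ y) : ℝ)
      = (inner ℝ θ (ρ y) : ℝ) + ∑ yh, π yh * (inner ℝ (ρ y) (ℓρ yh) : ℝ) := by
    rw [inner_add_left, sum_inner]
    congr 1
    apply Finset.sum_congr rfl
    intro yh _
    rw [real_inner_smul_left, real_inner_comm]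
  rw [hLΩτ, hLΩ, hconj, hτy, hinner]
  have : ∑ yh, π yh * ℓ yh y
      = (∑ yh, π yh * (inner ℝ (ρ y) (ℓρ yh) : ℝ)) + c y := by
    have hc : c y = (∑ yh, π yh) * c y := by rw [hsum]; ring
    rw [hc, Finset.sum_mul, ← Finset.sum_add_distrib]
    apply Finset.sum_congr rfl
    intro yh _
    rw [hdecomp yh y]; ring
  rw [this]; ring
end

section
/- Run OGD on convolutional Fenchel–Young losses L_t(W) = L_{Ω_τ}(Wx_t, y_t) with ‖x_t‖₂ ≤ 1 and non-increasing learning rates η_t satisfying λ ≤ η_t ≤ 2(L_t(W_t) − e_t)/‖G_t‖_F², where e_t = E_{ŷ∼π(θ_t)}[ℓ(ŷ, y_t)]. Then for any comparators U_1,…,U_T in a convex set of diameter D, Σ_{t=1}^T e_t ≤ Σ_{t=1}^T L_t(U_t) + (D/λ)(D/2 + P_T) with P_T = Σ_{t=2}^T ‖U_t − U_{t−1}‖_F. Moreover, the range of admissible η_t is non-empty because L_t(W_t) − e_t ≥ (λ/2)‖G_t‖_F². -/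
set_option maxHeartbeats 1000000

/-- Arithmetic step for the telescoping sum with varying step sizes. -/
lemma step_aux {X Y D lam p q A B s : ℝ} (hlam : 0 < lam) (hq : lam ≤ q)
    (hpq : q ≤ p) (hA : 0 ≤ A) (hB : 0 ≤ B) (hs : 0 ≤ s) (hD : 0 ≤ D)
    (hAD : A ≤ D) (hBD : B ≤ D) (hABs : A ≤ B + s)
    (hIH : X + B ^ 2 / (2 * p) ≤ D ^ 2 / (2 * p) + Y) :
    X + A ^ 2 / (2 * q) ≤ D ^ 2 / (2 * q) + (Y + D * s / lam) := by
  have hq' : 0 < q := lt_of_lt_of_le hlam hq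
  have hp' : 0 < p := lt_of_lt_of_le hq' hpq
  have h1 : A ^ 2 ≤ B ^ 2 + 2 * D * s := by nlinarith
  have h1' : A ^ 2 / (2 * q) ≤ (B ^ 2 + 2 * D * s) / (2 * q) := by gcongr
  have e1 : (B ^ 2 + 2 * D * s) / (2 * q) = B ^ 2 / (2 * q) + D * s / q := by
    field_simp
  have h2 : (D ^ 2 - B ^ 2) / (2 * p) ≤ (D ^ 2 - B ^ 2) / (2 * q) := by
    have hnum : (0:ℝ) ≤ D ^ 2 - B ^ 2 := by nlinarith
    gcongr
  have e2 : (D ^ 2 - B ^ 2) / (2 * p) = D ^ 2 / (2 * p) - B ^ 2 / (2 * p) := by ring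
  have e3 : (D ^ 2 - B ^ 2) / (2 * q) = D ^ 2 / (2 * q) - B ^ 2 / (2 * q) := by ring
  have h3 : D * s / q ≤ D * s / lam := by
    have : (0:ℝ) ≤ D * s := mul_nonneg hD hs
    gcongr
  linarith [h1', h2]

/-- Squared-distance contraction for metric projections onto convex sets. -/
lemma proj_sq_le {F : Type*} [NormedAddCommGroup F] [InnerProductSpace ℝ F]
    {K : Set F} (hconv : Convex ℝ K) {z P u : F} (hP : P ∈ K) (hu : u ∈ K)
    (hmin : ∀ w ∈ K, ‖P - z‖ ≤ ‖w - z‖) : ‖P - u‖ ^ 2 ≤ ‖z - u‖ ^ 2 := by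
  haveI : Nonempty K := ⟨⟨u, hu⟩⟩
  have hbdd : BddBelow (Set.range fun w : K => ‖z - (w : F)‖) := by
    refine ⟨0, ?_⟩
    rintro x ⟨w, rfl⟩
    exact norm_nonneg _
  have hinf : ‖z - P‖ = ⨅ w : K, ‖z - (w : F)‖ := by
    apply le_antisymm
    · apply le_ciInf
      intro w
      rw [norm_sub_rev z, norm_sub_rev z]
      exact hmin w w.2
    · exact ciInf_le hbdd ⟨P, hP⟩
  have hobtuse := (norm_eq_iInf_iff_real_inner_le_zero hconv hP).1 hinf u hu
  have expand : ‖z - u‖ ^ 2 = ‖P - u‖ ^ 2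
      + 2 * (inner ℝ (P - u) (z - P) : ℝ) + ‖z - P‖ ^ 2 := by
    have h : z - u = (P - u) + (z - P) := by abel
    rw [h]
    exact norm_add_sq_real _ _
  have hc : (inner ℝ (P - u) (z - P) : ℝ) = - (inner ℝ (z - P) (u - P) : ℝ) := by
    rw [real_inner_comm, ← inner_neg_right, neg_sub]
  rw [expand, hc]
  nlinarith [sq_nonneg ‖z - P‖, hobtuse]

/-- Theorem 2 (convolutional Fenchel–Young losses): running OGD with
non-increasing learning rates `λ ≤ η_t ≤ 2(L_t(W_t) − e_t)/‖G_t‖²` on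
convolutional Fenchel–Young surrogate losses yields
`Σ e_t ≤ Σ L_t(U_t) + (D/λ)(D/2 + P_T)`; moreover the learning-rate range is
non-empty since `L_t(W_t) − e_t ≥ (λ/2)‖G_t‖²`. The target–surrogate relation
`e_t = L_t(W_t) − S_t`, the lower bound `S_t ≥ (λ/2)‖∇L_{Ω_τ}(θ_t, y_t)‖₂²`
and `‖G_t‖_F ≤ ‖∇L_{Ω_τ}(θ_t, y_t)‖₂` (from `‖x_t‖₂ ≤ 1`) are given. -/
theorem conv_fenchel_young_main {d n T : ℕ} (hT : 0 < T)
    (Wset : Set (EuclideanSpace ℝ (Fin d × Fin n))) (D : ℝ)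
    (hclosed : IsClosed Wset) (hconv : Convex ℝ Wset)
    (hdiam : ∀ w ∈ Wset, ∀ w' ∈ Wset, ‖w - w'‖ ≤ D)
    (lam : ℝ) (hlam : 0 < lam)
    (L : ℕ → EuclideanSpace ℝ (Fin d × Fin n) → ℝ)
    (hLconv : ∀ t, ConvexOn ℝ Wset (L t))
    (hLnonneg : ∀ t w, 0 ≤ L t w)
    (η : ℕ → ℝ) (hηmono : ∀ s t, s ≤ t → η t ≤ η s)
    (W G : ℕ → EuclideanSpace ℝ (Fin d × Fin n))
    (hWmem : ∀ t, W t ∈ Wset)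
    -- G t = ∇L_{Ω_τ}(θ_t, y_t) x_tᵀ is a (sub)gradient of L t at W t
    (hsub : ∀ t, ∀ u ∈ Wset, L t (W t) + (inner ℝ (G t) (u - W t) : ℝ) ≤ L t u)
    -- OGD projection step
    (hproj : ∀ t, ∀ u ∈ Wset,
      ‖W (t + 1) - (W t - η t • G t)‖ ≤ ‖u - (W t - η t • G t)‖)
    -- e t : expected target loss of decoding; S t : L_Ω(θ_t + L^ρ π(θ_t), y_t);
    -- gnorm t : ‖∇L_{Ω_τ}(θ_t, y_t)‖₂
    (e S gnorm : ℕ → ℝ) (henonneg : ∀ t, 0 ≤ e t)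
    -- target–surrogate relation
    (hrel : ∀ t, e t = L t (W t) - S t)
    -- quadratic lower bound on the surrogate gap
    (hlow : ∀ t, lam / 2 * gnorm t ^ 2 ≤ S t)
    -- ‖G_t‖_F ≤ ‖∇L_{Ω_τ}(θ_t, y_t)‖₂ since ‖x_t‖₂ ≤ 1
    (hGle : ∀ t, ‖G t‖ ≤ gnorm t)
    -- learning-rate range
    (hηlow : ∀ t, lam ≤ η t)
    (hηhigh : ∀ t, η t * ‖G t‖ ^ 2 ≤ 2 * (L t (W t) - e t))
    (U : ℕ → EuclideanSpace ℝ (Fin d × Fin n)) (hU : ∀ t, U t ∈ Wset) :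
    (∀ t, lam / 2 * ‖G t‖ ^ 2 ≤ L t (W t) - e t) ∧
    ∑ t ∈ Finset.range T, e t ≤
      ∑ t ∈ Finset.range T, L t (U t)
        + D / lam * (D / 2 + ∑ t ∈ Finset.range (T - 1), ‖U (t + 1) - U t‖) := by
  have hD0 : 0 ≤ D := by
    have := hdiam (W 0) (hWmem 0) (W 0) (hWmem 0)
    simpa using this
  have hηpos : ∀ t, 0 < η t := fun t => lt_of_lt_of_le hlam (hηlow t)
  -- Part 1
  have part1 : ∀ t, lam / 2 * ‖G t‖ ^ 2 ≤ L t (W t) - e t := by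
    intro t
    have h1 : ‖G t‖ ^ 2 ≤ gnorm t ^ 2 :=
      pow_le_pow_left₀ (norm_nonneg _) (hGle t) 2
    have h2 : lam / 2 * ‖G t‖ ^ 2 ≤ lam / 2 * gnorm t ^ 2 := by
      apply mul_le_mul_of_nonneg_left h1
      positivity
    have := hlow t
    rw [hrel t]
    linarith
  refine ⟨part1, ?_⟩
  -- abbreviations
  set a : ℕ → ℝ := fun t => ‖W t - U t‖ with ha
  set b : ℕ → ℝ := fun t => ‖W (t + 1) - U t‖ with hb
  set s : ℕ → ℝ := fun t => ‖U (t + 1) - U t‖ with hs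
  have haD : ∀ t, a t ≤ D := fun t => hdiam _ (hWmem t) _ (hU t)
  have hbD : ∀ t, b t ≤ D := fun t => hdiam _ (hWmem (t + 1)) _ (hU t)
  have hann : ∀ t, 0 ≤ a t := fun t => norm_nonneg _
  have hbnn : ∀ t, 0 ≤ b t := fun t => norm_nonneg _
  have hsnn : ∀ t, 0 ≤ s t := fun t => norm_nonneg _
  -- projection: squared-distance contraction
  have hprojsq : ∀ t, ∀ u ∈ Wset,
      ‖W (t + 1) - u‖ ^ 2 ≤ ‖(W t - η t • G t) - u‖ ^ 2 := by
    intro t u hu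
    exact proj_sq_le hconv (hWmem (t + 1)) hu (fun w hw => hproj t w hw)
  -- per-step inequality
  have hstep : ∀ t, e t ≤ L t (U t) + (a t ^ 2 - b t ^ 2) / (2 * η t) := by
    intro t
    have hη := hηpos t
    have hb2 : b t ^ 2 ≤ ‖(W t - η t • G t) - U t‖ ^ 2 := hprojsq t (U t) (hU t)
    have hz : ‖(W t - η t • G t) - U t‖ ^ 2 =
        a t ^ 2 - 2 * η t * (inner ℝ (G t) (W t - U t) : ℝ)
          + η t ^ 2 * ‖G t‖ ^ 2 := by
      have e0 : (W t - η t • G t) - U t = (W t - U t) - η t • G t := by abel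
      rw [e0, norm_sub_sq_real, real_inner_smul_right, norm_smul, real_inner_comm]
      simp only [Real.norm_eq_abs, mul_pow, sq_abs]
      ring
    have hI : L t (W t) - L t (U t) ≤ (inner ℝ (G t) (W t - U t) : ℝ) := by
      have h := hsub t (U t) (hU t)
      have h2 : (inner ℝ (G t) (U t - W t) : ℝ) = - (inner ℝ (G t) (W t - U t) : ℝ) := by
        rw [← inner_neg_right, neg_sub]
      rw [h2] at h
      linarith
    have hhigh := hηhigh t
    have hG2 : (0:ℝ) ≤ ‖G t‖ ^ 2 := by positivity
    have key : 2 * η t * e t ≤ 2 * η t * L t (U t) + (a t ^ 2 - b t ^ 2) := by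
      nlinarith [hb2, hz, hI, hhigh, hG2, hη]
    have h2η : (0:ℝ) < 2 * η t := by linarith
    have : e t - L t (U t) ≤ (a t ^ 2 - b t ^ 2) / (2 * η t) := by
      rw [le_div_iff₀ h2η]
      nlinarith [key]
    linarith
  -- telescoping with varying step sizes
  have tele : ∀ m : ℕ,
      (∑ t ∈ Finset.range (m + 1), (a t ^ 2 - b t ^ 2) / (2 * η t))
        + b m ^ 2 / (2 * η m)
        ≤ D ^ 2 / (2 * η m) + D / lam * ∑ t ∈ Finset.range m, s t := by
    intro m
    induction m with
    | zero =>
      simp only [zero_add, Finset.range_one, Finset.sum_singleton, Finset.range_zero,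
        Finset.sum_empty, mul_zero, add_zero]
      have h0 : a 0 ^ 2 ≤ D ^ 2 := by nlinarith [haD 0, hann 0]
      have hη := hηpos 0
      have e1 : (a 0 ^ 2 - b 0 ^ 2) / (2 * η 0) + b 0 ^ 2 / (2 * η 0)
          = a 0 ^ 2 / (2 * η 0) := by ring
      rw [e1]
      gcongr
    | succ m ih =>
      have hsum : ∑ t ∈ Finset.range (m + 1 + 1), (a t ^ 2 - b t ^ 2) / (2 * η t)
          = (∑ t ∈ Finset.range (m + 1), (a t ^ 2 - b t ^ 2) / (2 * η t))
            + (a (m + 1) ^ 2 - b (m + 1) ^ 2) / (2 * η (m + 1)) :=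
        Finset.sum_range_succ _ _
      have hssum : ∑ t ∈ Finset.range (m + 1), s t
          = (∑ t ∈ Finset.range m, s t) + s m := Finset.sum_range_succ _ _
      rw [hsum, hssum]
      have e1 : (a (m + 1) ^ 2 - b (m + 1) ^ 2) / (2 * η (m + 1))
            + b (m + 1) ^ 2 / (2 * η (m + 1))
          = a (m + 1) ^ 2 / (2 * η (m + 1)) := by ring
      have e4 : D / lam * ((∑ t ∈ Finset.range m, s t) + s m)
          = D / lam * (∑ t ∈ Finset.range m, s t) + D * s m / lam := by ring
      have htri : a (m + 1) ≤ b m + s m := by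
        have hsplit : W (m + 1) - U (m + 1) = (W (m + 1) - U m) - (U (m + 1) - U m) := by
          abel
        calc a (m + 1) = ‖(W (m + 1) - U m) - (U (m + 1) - U m)‖ := by
              simp only [ha]; rw [hsplit]
          _ ≤ ‖W (m + 1) - U m‖ + ‖U (m + 1) - U m‖ := norm_sub_le _ _
          _ = b m + s m := rfl
      have hmain := step_aux
        (X := ∑ t ∈ Finset.range (m + 1), (a t ^ 2 - b t ^ 2) / (2 * η t))
        (Y := D / lam * ∑ t ∈ Finset.range m, s t)
        hlam (hηlow (m + 1)) (hηmono m (m + 1) (Nat.le_succ m))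
        (hann (m + 1)) (hbnn m) (hsnn m) hD0 (haD (m + 1)) (hbD m) htri ih
      linarith [hmain, e1, e4]
  -- combine
  obtain ⟨m, rfl⟩ : ∃ m, T = m + 1 := ⟨T - 1, (Nat.succ_pred_eq_of_pos hT).symm⟩
  have hsum1 : ∑ t ∈ Finset.range (m + 1), e t ≤
      ∑ t ∈ Finset.range (m + 1), (L t (U t) + (a t ^ 2 - b t ^ 2) / (2 * η t)) :=
    Finset.sum_le_sum fun t _ => hstep t
  rw [Finset.sum_add_distrib] at hsum1
  have htail : (∑ t ∈ Finset.range (m + 1), (a t ^ 2 - b t ^ 2) / (2 * η t))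
      ≤ D / lam * (D / 2 + ∑ t ∈ Finset.range m, s t) := by
    have h1 := tele m
    have hη := hηpos m
    have hbm : (0:ℝ) ≤ b m ^ 2 / (2 * η m) := by positivity
    have h2 : D ^ 2 / (2 * η m) ≤ D ^ 2 / (2 * lam) := by
      gcongr
      exact hηlow m
    have e2 : D ^ 2 / (2 * lam) + D / lam * ∑ t ∈ Finset.range m, s t
        = D / lam * (D / 2 + ∑ t ∈ Finset.range m, s t) := by
      field_simp
    linarith
  have hmsimp : m + 1 - 1 = m := rfl
  rw [hmsimp]
  linarith
end
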